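/- Given a fractional coloring γ of a finite graph G that attains the fractional chromatic number but has a vertex x with ∑_{S∈I(G,x)} γ(S) = 1 + ν for some ν > 0, then there exists an independent set S₀ containing x with S₀ ≠ {x} and γ(S₀) > 0, and shifting weight μ = min(ν, γ(S₀)) from S₀ to S₀ \ {x} yields another optimal fractional coloring with strictly smaller total excess ∑_{x∈X}(−1 + ∑_{S∈I(G,x)} γ(S)). -/

import Mathlib

open Finset

variable {V : Type*} [Fintype V] [DecidableEq V]

/-- `S` is an independent set of the graph `G`. -/
def IndepSet (G : SimpleGraph V) (S : Finset V) : Prop :=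
  ∀ x ∈ S, ∀ y ∈ S, ¬ G.Adj x y

/-- The total weight covering the vertex `x`: the sum of `γ` over the independent sets
containing `x`. -/
instance (G : SimpleGraph V) [DecidableRel G.Adj] (S : Finset V) :
    Decidable (IndepSet G S) := by unfold IndepSet; infer_instance

def cover (G : SimpleGraph V) [DecidableRel G.Adj] (γ : Finset V → ℝ) (x : V) : ℝ :=
  ∑ S ∈ univ.filter (fun S : Finset V => x ∈ S ∧ IndepSet G S), γ S

/-- given an optimal fractional coloring `γ` of a finite graph `G` with a
vertex `x` of covering weight `1 + ν`, `ν > 0` (and `γ {x} ≤ 1`), there is an independent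
set `S₀ ∋ x`, `S₀ ≠ {x}`, `γ S₀ > 0` such that shifting weight `μ = min ν (γ S₀)` from
`S₀` to `S₀ \ {x}` again yields an optimal fractional coloring, with strictly smaller
total excess `∑ y (−1 + cover y)`. -/
theorem stmt_1 (G : SimpleGraph V) [DecidableRel G.Adj] (γ : Finset V → ℝ)
    (hnonneg : ∀ S, 0 ≤ γ S)
    (hzero : ∀ S : Finset V, ¬ IndepSet G S → γ S = 0)
    (hfeas : ∀ y : V, 1 ≤ cover G γ y)
    (hopt : ∑ S : Finset V, γ S =
      sInf {w : ℝ | ∃ γ' : Finset V → ℝ, (∀ S, 0 ≤ γ' S) ∧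
        (∀ S : Finset V, ¬ IndepSet G S → γ' S = 0) ∧
        (∀ y : V, 1 ≤ cover G γ' y) ∧ w = ∑ S : Finset V, γ' S})
    (x : V) (ν : ℝ) (hν : 0 < ν) (hx : cover G γ x = 1 + ν)
    (hsingle : γ {x} ≤ 1) :
    ∃ S₀ : Finset V, x ∈ S₀ ∧ IndepSet G S₀ ∧ S₀ ≠ {x} ∧ 0 < γ S₀ ∧
      ∀ γ' : Finset V → ℝ,
        (γ' = fun S => if S = S₀ then γ S - min ν (γ S₀)
          else if S = S₀.erase x then γ S + min ν (γ S₀) else γ S) →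
        (∀ S, 0 ≤ γ' S) ∧
        (∀ S : Finset V, ¬ IndepSet G S → γ' S = 0) ∧
        (∀ y : V, 1 ≤ cover G γ' y) ∧
        (∑ S : Finset V, γ' S = ∑ S : Finset V, γ S) ∧
        (∑ y : V, (-1 + cover G γ' y)) < ∑ y : V, (-1 + cover G γ y) := by
  classical
  have hxindep : IndepSet G {x} := by
    intro a ha b hb
    simp only [Finset.mem_singleton] at ha hb
    subst ha; subst hb
    exact G.irrefl
  set F := univ.filter (fun S : Finset V => x ∈ S ∧ IndepSet G S) with hF
  have hxF : ({x} : Finset V) ∈ F := by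
    simp [hF, hxindep]
  have hcovsum : cover G γ x = γ {x} + ∑ S ∈ F.erase {x}, γ S := by
    rw [cover, ← Finset.add_sum_erase F γ hxF]
  have hpos : 0 < ∑ S ∈ F.erase {x}, γ S := by
    rw [hcovsum] at hx; linarith
  obtain ⟨S₀, hS₀mem, hS₀pos⟩ : ∃ S₀ ∈ F.erase {x}, 0 < γ S₀ := by
    by_contra h
    push_neg at h
    exact absurd (Finset.sum_nonpos h) (not_le.mpr hpos)
  have hS₀ne : S₀ ≠ {x} := (Finset.mem_erase.mp hS₀mem).1
  have hS₀F : S₀ ∈ F := (Finset.mem_erase.mp hS₀mem).2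
  have hxS₀ : x ∈ S₀ := ((Finset.mem_filter.mp hS₀F).2).1
  have hS₀indep : IndepSet G S₀ := ((Finset.mem_filter.mp hS₀F).2).2
  have herindep : IndepSet G (S₀.erase x) := by
    intro a ha b hb
    exact hS₀indep a (Finset.mem_of_mem_erase ha) b (Finset.mem_of_mem_erase hb)
  have hSne : S₀ ≠ S₀.erase x := by
    intro h
    exact (Finset.notMem_erase x S₀) (h ▸ hxS₀)
  set μ := min ν (γ S₀) with hμ
  have hμpos : 0 < μ := lt_min hν hS₀pos
  have hμν : μ ≤ ν := min_le_left _ _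
  have hμγ : μ ≤ γ S₀ := min_le_right _ _
  refine ⟨S₀, hxS₀, hS₀indep, hS₀ne, hS₀pos, ?_⟩
  intro γ' hγ'
  subst hγ'
  have hsplit : ∀ S : Finset V,
      (if S = S₀ then γ S - μ else if S = S₀.erase x then γ S + μ else γ S)
        = γ S + (if S = S₀ then -μ else 0) + (if S = S₀.erase x then μ else 0) := by
    intro S
    by_cases h1 : S = S₀
    · subst h1
      rw [if_pos rfl, if_pos rfl, if_neg hSne]
      ring
    · by_cases h2 : S = S₀.erase x
      · subst h2
        rw [if_neg h1, if_pos rfl, if_neg h1, if_pos rfl]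
        ring
      · rw [if_neg h1, if_neg h2, if_neg h1, if_neg h2]
        ring
  have hmemS₀ : ∀ y : V, S₀ ∈ univ.filter (fun S : Finset V => y ∈ S ∧ IndepSet G S) ↔ y ∈ S₀ := by
    intro y; simp [hS₀indep]
  have hmemer : ∀ y : V, S₀.erase x ∈ univ.filter (fun S : Finset V => y ∈ S ∧ IndepSet G S)
      ↔ y ∈ S₀.erase x := by
    intro y; simp [herindep]
  have hcov : ∀ y : V,
      cover G (fun S => if S = S₀ then γ S - μ else if S = S₀.erase x then γ S + μ else γ S) y
        = cover G γ y + (if y = x then -μ else 0) := by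
    intro y
    rw [cover, cover]
    simp only [hsplit]
    rw [Finset.sum_add_distrib, Finset.sum_add_distrib, Finset.sum_ite_eq', Finset.sum_ite_eq']
    rw [if_congr (hmemS₀ y) rfl rfl, if_congr (hmemer y) rfl rfl]
    by_cases hyx : y = x
    · subst hyx
      rw [if_pos hxS₀, if_neg (Finset.notMem_erase y S₀), if_pos rfl]
      ring
    · rw [if_neg hyx]
      have hiff : y ∈ S₀.erase x ↔ y ∈ S₀ := by simp [hyx]
      rw [if_congr hiff rfl rfl]
      by_cases hyS : y ∈ S₀
      · rw [if_pos hyS, if_pos hyS]; ring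
      · rw [if_neg hyS, if_neg hyS]; ring
  refine ⟨?_, ?_, ?_, ?_, ?_⟩
  · intro S
    simp only
    split_ifs with h1 h2
    · subst h1; linarith
    · subst h2; have := hnonneg (S₀.erase x); linarith
    · exact hnonneg S
  · intro S hS
    have h1 : S ≠ S₀ := fun h => hS (h ▸ hS₀indep)
    have h2 : S ≠ S₀.erase x := fun h => hS (h ▸ herindep)
    simp only [if_neg h1, if_neg h2]
    exact hzero S hS
  · intro y
    rw [hcov y]
    split_ifs with hyx
    · rw [hyx, hx]; linarith
    · have := hfeas y; linarith
  · simp only [← hμ, hsplit]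
    rw [Finset.sum_add_distrib, Finset.sum_add_distrib, Finset.sum_ite_eq', Finset.sum_ite_eq']
    simp only [Finset.mem_univ, if_true]
    ring
  · have h1 : ∀ y : V, (-1 + cover G
        (fun S => if S = S₀ then γ S - μ else if S = S₀.erase x then γ S + μ else γ S) y)
        = (-1 + cover G γ y) + (if y = x then -μ else 0) := by
      intro y; rw [hcov y]; ring
    simp only [← hμ, h1]
    rw [Finset.sum_add_distrib, Finset.sum_ite_eq']
    simp only [Finset.mem_univ, if_true]
    linarith
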